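/- (Limit of the denominator scale integral, equation (4.11).) For every z > 0 one has lim_{ε→0⁺} ∫_ε^z exp( ∫_y^z (ε·b₁(l) − b₂(l))/σ(l)² dl ) dy = ∫_0^z exp( −∫_y^z b₂(l)/σ(l)² dl ) dy, and the right-hand side integral is finite and positive. -/

import Mathlib

open MeasureTheory Real Set Filter
open scoped Topology

/-- (Limit of the denominator scale integral, equation (4.11).) For every `z > 0`:
`lim_{ε→0⁺} ∫_ε^z exp(∫_y^z (ε·b₁(l) − b₂(l))/σ(l)² dl) dy
  = ∫_0^z exp(−∫_y^z b₂(l)/σ(l)² dl) dy`, and the right-hand side is finite and positive. -/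
theorem statement5
    (b1 b2 σ : ℝ → ℝ)
    (hb1 : ContDiffOn ℝ 1 b1 (Ici 0))
    (hb1inf : ∃ m > 0, ∀ x ∈ Ici (0 : ℝ), m ≤ b1 x)
    (hb1sup : ∃ M : ℝ, ∀ x ∈ Ici (0 : ℝ), b1 x ≤ M)
    (hb2 : ContDiffOn ℝ 2 b2 (Ici 0))
    (hb2nonneg : ∀ x ∈ Ici (0 : ℝ), 0 ≤ b2 x)
    (hb20 : b2 0 = 0)
    (hb2' : 0 < derivWithin b2 (Ici 0) 0)
    (hσ : ContDiffOn ℝ 2 σ (Ici 0))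
    (hσnonneg : ∀ x ∈ Ici (0 : ℝ), 0 ≤ σ x)
    (hσzero : ∀ x ∈ Ici (0 : ℝ), (σ x = 0 ↔ x = 0))
    (hσ' : 0 < derivWithin σ (Ici 0) 0)
    (z : ℝ) (hz : 0 < z) :
    Tendsto
      (fun ε : ℝ => ∫ y in ε..z, Real.exp (∫ l in y..z, (ε * b1 l - b2 l) / σ l ^ 2))
      (𝓝[>] (0 : ℝ))
      (𝓝 (∫ y in (0 : ℝ)..z, Real.exp (-∫ l in y..z, b2 l / σ l ^ 2))) ∧
    IntervalIntegrable (fun y : ℝ => Real.exp (-∫ l in y..z, b2 l / σ l ^ 2)) volume 0 z ∧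
    0 < ∫ y in (0 : ℝ)..z, Real.exp (-∫ l in y..z, b2 l / σ l ^ 2) := by
  obtain ⟨m, hm, hmb1⟩ := hb1inf
  obtain ⟨M₀, hM₀⟩ := hb1sup
  set M := max M₀ 1 with hMdef
  have hMpos : (0:ℝ) < M := lt_of_lt_of_le one_pos (le_max_right _ _)
  have hb1M : ∀ x ∈ Ici (0:ℝ), b1 x ≤ M := fun x hx => (hM₀ x hx).trans (le_max_left _ _)
  have hb1c : ContinuousOn b1 (Ici 0) := hb1.continuousOn
  have hb2c : ContinuousOn b2 (Ici 0) := hb2.continuousOn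
  have hσc : ContinuousOn σ (Ici 0) := hσ.continuousOn
  have hσpos : ∀ l : ℝ, 0 < l → 0 < σ l := by
    intro l hl
    rcases (hσnonneg l hl.le).lt_or_eq with h | h
    · exact h
    · exact absurd ((hσzero l hl.le).mp h.symm) hl.ne'
  -- lower bound σ l ≥ c l on (0, z]
  obtain ⟨c, hc, hcσ⟩ : ∃ c > 0, ∀ l ∈ Ioc (0:ℝ) z, c * l ≤ σ l := by
    set s := derivWithin σ (Ici 0) 0 with hs
    have hσ0 : σ 0 = 0 := (hσzero 0 (mem_Ici.mpr le_rfl)).mpr rfl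
    have hdiff : DifferentiableWithinAt ℝ σ (Ici 0) 0 :=
      (hσ.differentiableOn (by norm_num)) 0 (mem_Ici.mpr le_rfl)
    have hder : HasDerivWithinAt σ s (Ici 0) 0 := hdiff.hasDerivWithinAt
    have hslope : Tendsto (fun l => σ l / l) (𝓝[>] 0) (𝓝 s) := by
      have := hasDerivWithinAt_iff_tendsto_slope.mp hder
      have heq : Ici (0:ℝ) \ {0} = Ioi 0 := by
        ext x; simp [mem_diff, mem_Ici, mem_Ioi, lt_iff_le_and_ne, eq_comm]
      rw [heq] at this
      refine this.congr' ?_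
      filter_upwards [self_mem_nhdsWithin] with x hx
      simp [slope, hσ0, div_eq_inv_mul]
    have hev : ∀ᶠ l in 𝓝[>] (0:ℝ), s / 2 < σ l / l :=
      hslope.eventually (eventually_gt_nhds (by linarith))
    obtain ⟨δ, hδpos, hδ⟩ := Metric.eventually_nhds_iff.mp (eventually_nhdsWithin_iff.mp hev)
    set δ' := min (δ/2) z with hδ'
    have hδ'pos : 0 < δ' := lt_min (by linarith) hz
    have hδ'z : δ' ≤ z := min_le_right _ _
    obtain ⟨w, hw, hwmin⟩ := (isCompact_Icc (a := δ') (b := z)).exists_isMinOn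
      ⟨δ', mem_Icc.mpr ⟨le_rfl, hδ'z⟩⟩
      ((hσ.continuousOn).mono (fun x hx => le_trans hδ'pos.le (mem_Icc.mp hx).1))
    have hwpos : 0 < σ w := hσpos w (lt_of_lt_of_le hδ'pos (mem_Icc.mp hw).1)
    refine ⟨min (s/2) (σ w / z), lt_min (by linarith) (div_pos hwpos hz), ?_⟩
    intro l hl
    obtain ⟨hl0, hlz⟩ := hl
    rcases lt_or_ge l δ' with h | h
    · have hll : s / 2 < σ l / l := by
        apply hδ
        · rw [Real.dist_eq, sub_zero, abs_of_pos hl0]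
          calc l < δ' := h
          _ ≤ δ/2 := min_le_left _ _
          _ < δ := by linarith
        · exact hl0
      calc min (s/2) (σ w / z) * l ≤ (s/2) * l :=
            mul_le_mul_of_nonneg_right (min_le_left _ _) hl0.le
      _ ≤ (σ l / l) * l := mul_le_mul_of_nonneg_right hll.le hl0.le
      _ = σ l := by field_simp
    · have hwl : σ w ≤ σ l := hwmin (mem_Icc.mpr ⟨h, hlz⟩)
      calc min (s/2) (σ w / z) * l ≤ (σ w / z) * l :=
            mul_le_mul_of_nonneg_right (min_le_right _ _) hl0.le
      _ ≤ (σ w / z) * z := mul_le_mul_of_nonneg_left hlz (div_nonneg hwpos.le hz.le)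
      _ = σ w := by field_simp
      _ ≤ σ l := hwl
  -- continuity of quotients f/σ² on Ioi 0
  have hquot : ∀ f : ℝ → ℝ, ContinuousOn f (Ici 0) →
      ContinuousOn (fun l => f l / σ l ^ 2) (Ioi 0) := by
    intro f hf
    exact (hf.mono Ioi_subset_Ici_self).div ((hσc.mono Ioi_subset_Ici_self).pow 2)
      (fun l hl => pow_ne_zero _ (hσpos l hl).ne')
  -- interval integrability on [y, z] for y > 0
  have hii : ∀ g : ℝ → ℝ, ContinuousOn g (Ioi 0) → ∀ y : ℝ, 0 < y →
      IntervalIntegrable g volume y z := by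
    intro g hg y hy
    apply (hg.mono ?_).intervalIntegrable
    intro x hx
    exact lt_of_lt_of_le (lt_min hy hz) hx.1
  -- continuity of primitives y ↦ ∫_y^z g on Ioi 0
  have hprim : ∀ g : ℝ → ℝ, ContinuousOn g (Ioi 0) →
      ContinuousOn (fun y => ∫ l in y..z, g l) (Ioi 0) := by
    intro g hg y hy
    exact (intervalIntegral.integral_hasDerivAt_left (hii g hg y hy)
      (hg.stronglyMeasurableAtFilter isOpen_Ioi y hy)
      (hg.continuousAt (isOpen_Ioi.mem_nhds hy))).continuousAt.continuousWithinAt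
  have hb2quot := hquot b2 hb2c
  have hb1quot := hquot b1 hb1c
  -- nonnegativity of B
  have hBnonneg : ∀ y : ℝ, 0 < y → y ≤ z → 0 ≤ ∫ l in y..z, b2 l / σ l ^ 2 := by
    intro y hy hyz
    apply intervalIntegral.integral_nonneg hyz
    intro u hu
    have hu0 : (0:ℝ) ≤ u := hy.le.trans hu.1
    exact div_nonneg (hb2nonneg u hu0) (by positivity)
  -- the uniform bound on the inner integral
  have hbound : ∀ ε y : ℝ, 0 < ε → ε < y → y ≤ z →
      (∫ l in y..z, (ε * b1 l - b2 l) / σ l ^ 2) ≤ M / c ^ 2 := by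
    intro ε y hε hεy hyz
    have hy : 0 < y := hε.trans hεy
    have hgc : ContinuousOn (fun l : ℝ => ε * M / (c ^ 2 * l ^ 2)) (Ioi 0) := by
      apply continuousOn_const.div (Continuous.continuousOn (by continuity))
      intro l hl
      have : (0:ℝ) < l := hl
      positivity
    have h1 : IntervalIntegrable (fun l => (ε * b1 l - b2 l) / σ l ^ 2) volume y z :=
      hii _ (hquot _ ((continuousOn_const.mul hb1c).sub hb2c)) y hy
    have h2 : IntervalIntegrable (fun l : ℝ => ε * M / (c ^ 2 * l ^ 2)) volume y z :=
      hii _ hgc y hy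
    have step1 : (∫ l in y..z, (ε * b1 l - b2 l) / σ l ^ 2)
        ≤ ∫ l in y..z, ε * M / (c ^ 2 * l ^ 2) := by
      apply intervalIntegral.integral_mono_on hyz h1 h2
      intro l hl
      have hl0 : 0 < l := lt_of_lt_of_le hy hl.1
      have hσl : c * l ≤ σ l := hcσ l ⟨hl0, hl.2⟩
      have hσlpos : 0 < σ l := hσpos l hl0
      have hσl2 : c ^ 2 * l ^ 2 ≤ σ l ^ 2 := by
        have h := mul_le_mul hσl hσl (by positivity) hσlpos.le
        nlinarith
      have hb2l : 0 ≤ b2 l := hb2nonneg l hl0.le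
      have hb1l : b1 l ≤ M := hb1M l hl0.le
      calc (ε * b1 l - b2 l) / σ l ^ 2 ≤ ε * M / σ l ^ 2 := by
            apply div_le_div_of_nonneg_right ?_ (by positivity)
            · nlinarith
      _ ≤ ε * M / (c ^ 2 * l ^ 2) := by
            apply div_le_div_of_nonneg_left (by positivity) (by positivity) hσl2
    have step2 : (∫ l in y..z, ε * M / (c ^ 2 * l ^ 2))
        = ε * M / c ^ 2 * (1 / y - 1 / z) := by
      have hd : ∀ l ∈ uIcc y z, HasDerivAt (fun x : ℝ => -(ε * M / c ^ 2) * x⁻¹)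
          (ε * M / (c ^ 2 * l ^ 2)) l := by
        intro l hl
        have hl0 : l ≠ 0 := (lt_of_lt_of_le (lt_min hy hz) hl.1).ne'
        have := (hasDerivAt_inv hl0).const_mul (-(ε * M / c ^ 2))
        convert this using 1
        · rfl
        · rfl
        field_simp
      rw [intervalIntegral.integral_eq_sub_of_hasDerivAt hd h2]
      have hy0 : y ≠ 0 := hy.ne'
      have hz0 : z ≠ 0 := hz.ne'
      field_simp
      ring
    have h1y : ε * (1 / y) ≤ 1 := by
      rw [mul_one_div]
      exact (div_le_one hy).mpr hεy.le
    have h1z : (0:ℝ) ≤ 1 / z := by positivity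
    calc (∫ l in y..z, (ε * b1 l - b2 l) / σ l ^ 2)
        ≤ ε * M / c ^ 2 * (1 / y - 1 / z) := step1.trans_eq step2
      _ ≤ ε * M / c ^ 2 * (1 / y) := by
          apply mul_le_mul_of_nonneg_left (by linarith) (by positivity)
      _ = M / c ^ 2 * (ε * (1 / y)) := by ring
      _ ≤ M / c ^ 2 * 1 := mul_le_mul_of_nonneg_left h1y (by positivity)
      _ = M / c ^ 2 := mul_one _
  -- pointwise limit of the indicator functions
  have hlim : ∀ y : ℝ, Tendsto (fun ε : ℝ =>
        (Ioc ε z).indicator (fun u => Real.exp (∫ l in u..z, (ε * b1 l - b2 l) / σ l ^ 2)) y)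
      (𝓝[>] (0:ℝ))
      (𝓝 ((Ioc (0:ℝ) z).indicator (fun u => Real.exp (-∫ l in u..z, b2 l / σ l ^ 2)) y)) := by
    intro y
    by_cases hy : y ∈ Ioc (0:ℝ) z
    · rw [indicator_of_mem hy]
      obtain ⟨hy0, hyz⟩ := hy
      have hiA := hii _ hb1quot y hy0
      have hiB := hii _ hb2quot y hy0
      have hsplit : ∀ ε : ℝ, (∫ l in y..z, (ε * b1 l - b2 l) / σ l ^ 2)
          = ε * (∫ l in y..z, b1 l / σ l ^ 2) - ∫ l in y..z, b2 l / σ l ^ 2 := by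
        intro ε
        rw [← intervalIntegral.integral_const_mul, ← intervalIntegral.integral_sub
          (hiA.const_mul ε) hiB]
        apply intervalIntegral.integral_congr
        intro l _
        simp only
        ring
      have hcont : Continuous (fun ε : ℝ =>
          Real.exp (ε * (∫ l in y..z, b1 l / σ l ^ 2) - ∫ l in y..z, b2 l / σ l ^ 2)) :=
        Real.continuous_exp.comp ((continuous_id.mul continuous_const).sub continuous_const)
      have htend : Tendsto (fun ε : ℝ =>
          Real.exp (ε * (∫ l in y..z, b1 l / σ l ^ 2) - ∫ l in y..z, b2 l / σ l ^ 2))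
          (𝓝[>] (0:ℝ)) (𝓝 (Real.exp (-∫ l in y..z, b2 l / σ l ^ 2))) := by
        apply tendsto_nhdsWithin_of_tendsto_nhds
        have := hcont.tendsto 0
        simpa using this
      refine Tendsto.congr' ?_ htend
      filter_upwards [Ioo_mem_nhdsGT_of_mem ⟨le_rfl, hy0⟩] with ε hε
      have hmem : y ∈ Ioc ε z := ⟨hε.2, hyz⟩
      rw [indicator_of_mem hmem, hsplit ε]
    · rw [indicator_of_notMem hy]
      apply Tendsto.congr' ?_ tendsto_const_nhds
      filter_upwards [self_mem_nhdsWithin] with ε hε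
      symm
      apply indicator_of_notMem
      intro hmem
      exact hy ⟨lt_trans hε hmem.1, hmem.2⟩
  -- measurability
  have hmeas : ∀ ε : ℝ, 0 < ε → AEStronglyMeasurable
      ((Ioc ε z).indicator (fun u => Real.exp (∫ l in u..z, (ε * b1 l - b2 l) / σ l ^ 2)))
      volume := by
    intro ε hε
    rw [aestronglyMeasurable_indicator_iff measurableSet_Ioc]
    apply ContinuousOn.aestronglyMeasurable ?_ measurableSet_Ioc
    apply Real.continuous_exp.comp_continuousOn
    exact (hprim _ (hquot _ ((continuousOn_const.mul hb1c).sub hb2c))).mono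
      (fun x hx => hε.trans hx.1)
  -- dominated convergence
  have hmain : Tendsto (fun ε : ℝ => ∫ y : ℝ,
        (Ioc ε z).indicator (fun u => Real.exp (∫ l in u..z, (ε * b1 l - b2 l) / σ l ^ 2)) y)
      (𝓝[>] (0:ℝ))
      (𝓝 (∫ y : ℝ,
        (Ioc (0:ℝ) z).indicator (fun u => Real.exp (-∫ l in u..z, b2 l / σ l ^ 2)) y)) := by
    apply tendsto_integral_filter_of_dominated_convergence
      ((Ioc (0:ℝ) z).indicator fun _ => Real.exp (M / c ^ 2))
    · filter_upwards [self_mem_nhdsWithin] with ε hε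
      exact hmeas ε hε
    · filter_upwards [self_mem_nhdsWithin] with ε hε
      apply ae_of_all
      intro y
      by_cases hy : y ∈ Ioc ε z
      · have hmem : y ∈ Ioc (0:ℝ) z := ⟨lt_trans hε hy.1, hy.2⟩
        rw [indicator_of_mem hy, indicator_of_mem hmem,
          Real.norm_eq_abs, abs_of_pos (Real.exp_pos _)]
        exact Real.exp_le_exp.mpr (hbound ε y hε hy.1 hy.2)
      · rw [indicator_of_notMem hy, norm_zero]
        exact indicator_nonneg (fun _ _ => (Real.exp_pos _).le) y
    · rw [integrable_indicator_iff measurableSet_Ioc]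
      exact integrableOn_const measure_Ioc_lt_top.ne
    · exact ae_of_all _ hlim
  have h0conv : (∫ y in (0:ℝ)..z, Real.exp (-∫ l in y..z, b2 l / σ l ^ 2))
      = ∫ y : ℝ, (Ioc (0:ℝ) z).indicator
        (fun u => Real.exp (-∫ l in u..z, b2 l / σ l ^ 2)) y := by
    rw [intervalIntegral.integral_of_le hz.le, integral_indicator measurableSet_Ioc]
  refine ⟨?_, ?_, ?_⟩
  · rw [h0conv]
    refine Tendsto.congr' ?_ hmain
    filter_upwards [Ioc_mem_nhdsGT hz] with ε hε
    rw [intervalIntegral.integral_of_le hε.2, integral_indicator measurableSet_Ioc]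
  · rw [intervalIntegrable_iff_integrableOn_Ioc_of_le hz.le]
    apply Integrable.mono' (g := fun _ : ℝ => (1:ℝ))
      (integrableOn_const measure_Ioc_lt_top.ne)
    · apply ContinuousOn.aestronglyMeasurable ?_ measurableSet_Ioc
      apply Real.continuous_exp.comp_continuousOn
      exact ((hprim _ hb2quot).neg).mono (fun x hx => hx.1)
    · apply (ae_restrict_iff' measurableSet_Ioc).mpr (ae_of_all _ ?_)
      intro y hy
      rw [Real.norm_eq_abs, abs_of_pos (Real.exp_pos _)]
      exact Real.exp_le_one_iff.mpr (neg_nonpos.mpr (hBnonneg y hy.1 hy.2))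
  · have hint2 : IntervalIntegrable (fun y : ℝ =>
        Real.exp (-∫ l in y..z, b2 l / σ l ^ 2)) volume 0 z := by
      rw [intervalIntegrable_iff_integrableOn_Ioc_of_le hz.le]
      apply Integrable.mono' (g := fun _ : ℝ => (1:ℝ))
        (integrableOn_const measure_Ioc_lt_top.ne)
      · apply ContinuousOn.aestronglyMeasurable ?_ measurableSet_Ioc
        apply Real.continuous_exp.comp_continuousOn
        exact ((hprim _ hb2quot).neg).mono (fun x hx => hx.1)
      · apply (ae_restrict_iff' measurableSet_Ioc).mpr (ae_of_all _ ?_)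
        intro y hy
        rw [Real.norm_eq_abs, abs_of_pos (Real.exp_pos _)]
        exact Real.exp_le_one_iff.mpr (neg_nonpos.mpr (hBnonneg y hy.1 hy.2))
    exact intervalIntegral.intervalIntegral_pos_of_pos_on hint2
      (fun y _ => Real.exp_pos _) hz
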